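/- In the ring $R = \mathbb{Z}[c_2,\dots,c_{2n},y]/(2c_{odd}, y c_{odd}, y^2+(-1)^n 2^{2n-2} c_{2n})$, the torsion subgroup of the underlying abelian group of $R$ is precisely the ideal generated by the classes $c_i$ with $i$ odd, and every torsion element is killed by $2$. -/

import Mathlib

noncomputable section
open MvPolynomial

/-- The defining ideal of `CH^*BSO(2n) = ℤ[c₂,…,c₂ₙ,y]/(2c_odd, y·c_odd, y² + (-1)ⁿ2^(2n-2)c₂ₙ)`.
The variable `some i` represents `c_{i+2}` and `none` represents `y`. -/
def chowIdeal (n : ℕ) (hn : 1 ≤ n) : Ideal (MvPolynomial (Option (Fin (2 * n - 1))) ℤ) :=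
  Ideal.span
    ({p | ∃ i : Fin (2 * n - 1), Odd (i.val + 2) ∧ p = 2 * X (some i)} ∪
     {p | ∃ i : Fin (2 * n - 1), Odd (i.val + 2) ∧ p = X none * X (some i)} ∪
     {X none ^ 2 + (-1 : MvPolynomial (Option (Fin (2 * n - 1))) ℤ) ^ n * 2 ^ (2 * n - 2) *
        X (some ⟨2 * n - 2, by omega⟩)})

namespace ChowAux

variable (n : ℕ) (hn : 1 ≤ n)

local notation "P" => MvPolynomial (Option (Fin (2 * n - 1))) ℤ

/-- The set of odd Chern class variables. -/
def oddSet : Set (MvPolynomial (Option (Fin (2 * n - 1))) ℤ) :=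
  {p | ∃ i : Fin (2 * n - 1), Odd (i.val + 2) ∧ p = X (some i)}

/-- The relation `y² + (-1)ⁿ 2^(2n-2) c₂ₙ`. -/
def fpoly : MvPolynomial (Option (Fin (2 * n - 1))) ℤ :=
  X none ^ 2 + (-1 : MvPolynomial (Option (Fin (2 * n - 1))) ℤ) ^ n * 2 ^ (2 * n - 2) *
    X (some ⟨2 * n - 2, by omega⟩)

/-- The ideal `chowIdeal + (odd Chern classes)`. -/
def K : Ideal (MvPolynomial (Option (Fin (2 * n - 1))) ℤ) :=
  Ideal.span (oddSet n ∪ {fpoly n hn})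

/-- Substitution sending odd Chern class variables to `0`, identity on the rest. -/
def theta : MvPolynomial (Option (Fin (2 * n - 1))) ℤ →ₐ[ℤ]
    MvPolynomial (Option (Fin (2 * n - 1))) ℤ :=
  aeval fun j => j.elim (X none) fun i => if Odd (i.val + 2) then 0 else X (some i)

lemma theta_X_none : theta n (X none) = X none := by simp [theta]

lemma theta_X_some (i : Fin (2 * n - 1)) :
    theta n (X (some i)) = if Odd (i.val + 2) then 0 else X (some i) := by
  simp [theta]

lemma theta_fpoly : theta n (fpoly n hn) = fpoly n hn := by
  have hne : ¬ Odd ((2 * n - 2 : ℕ) + 2) := by rw [Nat.odd_iff]; omega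
  simp only [fpoly, map_add, map_pow, map_mul, map_neg, map_one, map_ofNat,
    theta_X_none, theta_X_some, if_neg hne]

lemma sub_theta_mem (p : MvPolynomial (Option (Fin (2 * n - 1))) ℤ) :
    p - theta n p ∈ Ideal.span (oddSet n) := by
  induction p using MvPolynomial.induction_on with
  | C a => simp [theta]
  | add p q hp hq =>
      rw [map_add]
      have := Ideal.add_mem _ hp hq
      have heq : p - theta n p + (q - theta n q) = p + q - (theta n p + theta n q) := by ring
      rwa [heq] at this
  | mul_X p j hp =>
      rw [map_mul]
      match j with
      | none =>
          rw [theta_X_none]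
          have heq : p * X none - theta n p * X none = (p - theta n p) * X none := by ring
          rw [heq]
          exact Ideal.mul_mem_right _ _ hp
      | some i =>
          rw [theta_X_some]
          by_cases hodd : Odd (i.val + 2)
          · rw [if_pos hodd, mul_zero, sub_zero]
            exact Ideal.mul_mem_left _ _ (Ideal.subset_span ⟨i, hodd, rfl⟩)
          · rw [if_neg hodd]
            have heq : p * X (some i) - theta n p * X (some i) =
                (p - theta n p) * X (some i) := by ring
            rw [heq]
            exact Ideal.mul_mem_right _ _ hp

lemma mem_K_iff (p : MvPolynomial (Option (Fin (2 * n - 1))) ℤ) :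
    p ∈ K n hn ↔ theta n p ∈ Ideal.span {fpoly n hn} := by
  constructor
  · intro hp
    have hmap : Ideal.map (theta n).toRingHom (K n hn) ≤ Ideal.span {fpoly n hn} := by
      rw [K, Ideal.map_span, Ideal.span_le]
      rintro q ⟨r, hr | hr, rfl⟩
      · obtain ⟨i, hi, rfl⟩ := hr
        show theta n (X (some i)) ∈ _
        rw [theta_X_some, if_pos hi]
        exact Ideal.zero_mem _
      · rw [Set.mem_singleton_iff] at hr
        subst hr
        show theta n (fpoly n hn) ∈ _
        rw [theta_fpoly]
        exact Ideal.subset_span rfl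
    exact hmap (Ideal.mem_map_of_mem _ hp)
  · intro h
    have h1 : p - theta n p ∈ K n hn :=
      Ideal.span_mono Set.subset_union_left (sub_theta_mem n p)
    have h2 : theta n p ∈ K n hn :=
      Ideal.span_mono Set.subset_union_right h
    have := Ideal.add_mem _ h1 h2
    rwa [sub_add_cancel] at this

lemma fpoly_dvd {m : ℤ} (hm : m ≠ 0) (q : MvPolynomial (Option (Fin (2 * n - 1))) ℤ)
    (h : fpoly n hn ∣ (m : MvPolynomial (Option (Fin (2 * n - 1))) ℤ) * q) :
    fpoly n hn ∣ q := by
  set e := optionEquivLeft ℤ (Fin (2 * n - 1)) with he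
  set b : MvPolynomial (Fin (2 * n - 1)) ℤ :=
    (-1 : MvPolynomial (Fin (2 * n - 1)) ℤ) ^ n * 2 ^ (2 * n - 2) *
      X ⟨2 * n - 2, by omega⟩ with hb
  have hef : e (fpoly n hn) = Polynomial.X ^ 2 + Polynomial.C b := by
    rw [fpoly, hb, he]
    simp only [map_add, map_pow, map_mul, map_neg, map_one, map_ofNat,
      optionEquivLeft_X_none, optionEquivLeft_X_some, Polynomial.C_mul, Polynomial.C_pow,
      Polynomial.C_neg, Polynomial.C_1]
  have hmonic : (e (fpoly n hn)).Monic := by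
    rw [hef]
    exact Polynomial.monic_X_pow_add
      (lt_of_le_of_lt Polynomial.degree_C_le (by norm_num))
  -- transfer divisibility
  have h' : e (fpoly n hn) ∣ (m : Polynomial (MvPolynomial (Fin (2 * n - 1)) ℤ)) * e q := by
    have := map_dvd e h
    rwa [map_mul, map_intCast] at this
  set F := e (fpoly n hn) with hF
  set g := e q with hg
  set r := g %ₘ F with hr
  have hgd : r + F * (g /ₘ F) = g := Polynomial.modByMonic_add_div g F
  obtain ⟨t, ht⟩ := h'
  have key : F ∣ (m : Polynomial (MvPolynomial (Fin (2 * n - 1)) ℤ)) * r := by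
    refine ⟨t - (m : Polynomial (MvPolynomial (Fin (2 * n - 1)) ℤ)) * (g /ₘ F), ?_⟩
    linear_combination (m : Polynomial (MvPolynomial (Fin (2 * n - 1)) ℤ)) * hgd + ht
  have hmD : ((m : MvPolynomial (Fin (2 * n - 1)) ℤ)) ≠ 0 := Int.cast_ne_zero.mpr hm
  have hdeg : ((m : Polynomial (MvPolynomial (Fin (2 * n - 1)) ℤ)) * r).degree < F.degree := by
    rw [show ((m : Polynomial (MvPolynomial (Fin (2 * n - 1)) ℤ))) =
        Polynomial.C ((m : MvPolynomial (Fin (2 * n - 1)) ℤ)) from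
      (map_intCast (Polynomial.C : MvPolynomial (Fin (2 * n - 1)) ℤ →+* _) m).symm,
      Polynomial.degree_mul, Polynomial.degree_C hmD, zero_add]
    exact Polynomial.degree_modByMonic_lt g hmonic
  have hr0 : (m : Polynomial (MvPolynomial (Fin (2 * n - 1)) ℤ)) * r = 0 :=
    Polynomial.eq_zero_of_dvd_of_degree_lt key hdeg
  have hmP : ((m : Polynomial (MvPolynomial (Fin (2 * n - 1)) ℤ))) ≠ 0 :=
    Int.cast_ne_zero.mpr hm
  have hrz : r = 0 := (mul_eq_zero.mp hr0).resolve_left hmP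
  have hFg : F ∣ g := (Polynomial.modByMonic_eq_zero_iff_dvd hmonic).mp hrz
  obtain ⟨s, hs⟩ := hFg
  refine ⟨e.symm s, e.injective ?_⟩
  rw [map_mul, AlgEquiv.apply_symm_apply]
  exact hs

lemma mul_mem_K {m : ℕ} (hm : m ≠ 0) (p : MvPolynomial (Option (Fin (2 * n - 1))) ℤ)
    (h : (m : MvPolynomial (Option (Fin (2 * n - 1))) ℤ) * p ∈ K n hn) : p ∈ K n hn := by
  rw [mem_K_iff] at h ⊢
  rw [map_mul, map_natCast] at h
  rw [Ideal.mem_span_singleton] at h ⊢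
  have hm' : ((m : ℤ) : MvPolynomial (Option (Fin (2 * n - 1))) ℤ) =
      (m : MvPolynomial (Option (Fin (2 * n - 1))) ℤ) := by push_cast; rfl
  exact fpoly_dvd n hn (m := (m : ℤ)) (Int.natCast_ne_zero.mpr hm) _ (by rwa [hm'])

lemma K_eq : K n hn = chowIdeal n hn ⊔ Ideal.span (oddSet n) := by
  apply le_antisymm
  · rw [K, Ideal.span_le]
    rintro p (⟨i, hi, rfl⟩ | hp)
    · exact Ideal.mem_sup_right (Ideal.subset_span ⟨i, hi, rfl⟩)
    · rw [Set.mem_singleton_iff] at hp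
      subst hp
      exact Ideal.mem_sup_left (Ideal.subset_span (Or.inr rfl))
  · apply sup_le
    · rw [chowIdeal, Ideal.span_le]
      rintro p ((⟨i, hi, rfl⟩ | ⟨i, hi, rfl⟩) | hp)
      · exact Ideal.mul_mem_left _ 2 (Ideal.subset_span (Or.inl ⟨i, hi, rfl⟩))
      · exact Ideal.mul_mem_left _ _ (Ideal.subset_span (Or.inl ⟨i, hi, rfl⟩))
      · rw [Set.mem_singleton_iff] at hp
        subst hp
        exact Ideal.subset_span (Or.inr rfl)
    · rw [Ideal.span_le]
      intro p hp
      exact Ideal.subset_span (Or.inl hp)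

lemma two_mul_mem_chow (p : MvPolynomial (Option (Fin (2 * n - 1))) ℤ)
    (hp : p ∈ Ideal.span (oddSet n)) : 2 * p ∈ chowIdeal n hn := by
  induction hp using Submodule.span_induction with
  | mem q hq =>
      obtain ⟨i, hi, rfl⟩ := hq
      exact Ideal.subset_span (Or.inl (Or.inl ⟨i, hi, rfl⟩))
  | zero => simp
  | add a b _ _ ha hb =>
      rw [mul_add]; exact Ideal.add_mem _ ha hb
  | smul r a _ ha =>
      rw [smul_eq_mul, show (2 : MvPolynomial (Option (Fin (2 * n - 1))) ℤ) * (r * a)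
        = r * (2 * a) by ring]
      exact Ideal.mul_mem_left _ _ ha

end ChowAux

open ChowAux in
/-- In `R = ℤ[c₂,…,c₂ₙ,y]/(2c_odd, y·c_odd, y² + (-1)ⁿ2^(2n-2)c₂ₙ)`, the torsion
subgroup of the underlying abelian group is exactly the ideal generated by the odd `cᵢ`,
and every torsion element is killed by `2`. -/
theorem torsion_eq_odd_chern_ideal (n : ℕ) (hn : 1 ≤ n)
    (x : MvPolynomial (Option (Fin (2 * n - 1))) ℤ ⧸ chowIdeal n hn) :
    ((∃ m : ℕ, m ≠ 0 ∧ m • x = 0) ↔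
      x ∈ Ideal.span {p : MvPolynomial (Option (Fin (2 * n - 1))) ℤ ⧸ chowIdeal n hn |
        ∃ i : Fin (2 * n - 1), Odd (i.val + 2) ∧
          p = Ideal.Quotient.mk (chowIdeal n hn) (X (some i))}) ∧
    ((∃ m : ℕ, m ≠ 0 ∧ m • x = 0) → 2 • x = 0) := by
  obtain ⟨p, rfl⟩ := Ideal.Quotient.mk_surjective x
  set I := chowIdeal n hn with hI
  set mk := Ideal.Quotient.mk I with hmk
  have hsets : {p : MvPolynomial (Option (Fin (2 * n - 1))) ℤ ⧸ I |
      ∃ i : Fin (2 * n - 1), Odd (i.val + 2) ∧ p = mk (X (some i))} = mk '' (oddSet n) := by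
    ext q
    constructor
    · rintro ⟨i, hi, rfl⟩; exact ⟨X (some i), ⟨i, hi, rfl⟩, rfl⟩
    · rintro ⟨r, ⟨i, hi, rfl⟩, rfl⟩; exact ⟨i, hi, rfl⟩
  have mem_iff : mk p ∈ Ideal.span {q : MvPolynomial (Option (Fin (2 * n - 1))) ℤ ⧸ I |
      ∃ i : Fin (2 * n - 1), Odd (i.val + 2) ∧ q = mk (X (some i))} ↔ p ∈ K n hn := by
    rw [hsets, ← Ideal.map_span, hmk, Ideal.mem_quotient_iff_mem_sup, K_eq, sup_comm]
  have h1 : (∃ m : ℕ, m ≠ 0 ∧ m • mk p = 0) →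
      mk p ∈ Ideal.span {q : MvPolynomial (Option (Fin (2 * n - 1))) ℤ ⧸ I |
        ∃ i : Fin (2 * n - 1), Odd (i.val + 2) ∧ q = mk (X (some i))} := by
    rintro ⟨m, hm, hmx⟩
    have hmem : (m : MvPolynomial (Option (Fin (2 * n - 1))) ℤ) * p ∈ I := by
      rw [← Ideal.Quotient.eq_zero_iff_mem]
      show mk _ = 0
      rw [map_mul, map_natCast, ← nsmul_eq_mul]
      exact hmx
    have hmemK : (m : MvPolynomial (Option (Fin (2 * n - 1))) ℤ) * p ∈ K n hn :=
      (K_eq n hn ▸ le_sup_left : I ≤ K n hn) hmem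
    exact mem_iff.mpr (mul_mem_K n hn hm p hmemK)
  have h2 : mk p ∈ Ideal.span {q : MvPolynomial (Option (Fin (2 * n - 1))) ℤ ⧸ I |
      ∃ i : Fin (2 * n - 1), Odd (i.val + 2) ∧ q = mk (X (some i))} → 2 • mk p = 0 := by
    intro hx
    rw [mem_iff, K_eq] at hx
    obtain ⟨a, ha, b, hb, hab⟩ := Submodule.mem_sup.mp hx
    have h2p : (2 : MvPolynomial (Option (Fin (2 * n - 1))) ℤ) * p ∈ I := by
      rw [← hab, mul_add]
      exact Ideal.add_mem _ (Ideal.mul_mem_left _ _ ha) (two_mul_mem_chow n hn b hb)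
    have h2p' : ((2 : ℕ) : MvPolynomial (Option (Fin (2 * n - 1))) ℤ) * p ∈ I := by
      push_cast
      exact h2p
    calc (2 : ℕ) • mk p = mk (((2 : ℕ) : MvPolynomial (Option (Fin (2 * n - 1))) ℤ) * p) := by
          rw [nsmul_eq_mul, map_mul, map_natCast]
      _ = 0 := Ideal.Quotient.eq_zero_iff_mem.mpr h2p'
  exact ⟨⟨h1, fun hx => ⟨2, by norm_num, h2 hx⟩⟩, fun hm => h2 (h1 hm)⟩
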